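/- Let S be a finite planar point set in general position with maximum Delaunay depth f, and let L be the number of nonempty Delaunay levels Lev_j(S) (sets of plane points of relative depth j). Then L equals f or f + 1. -/

import Mathlib

open Metric Set

noncomputable section

abbrev Pt : Type := EuclideanSpace ℝ (Fin 2)

def pt (a b : ℝ) : Pt := WithLp.toLp 2 ![a, b]

/-- General position: no 3 collinear, no 4 cocircular. -/
def GenPos (S : Set Pt) : Prop :=
  (∀ T ⊆ S, T.ncard = 3 → ¬ Collinear ℝ T) ∧
  (∀ T ⊆ S, T.ncard = 4 → ¬ ∃ (c : Pt) (r : ℝ), ∀ p ∈ T, dist p c = r)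

/-- An empty circle through `p` and `q` witnessing Delaunay adjacency. -/
def EmptyCircle (S : Set Pt) (p q : Pt) : Prop :=
  ∃ (c : Pt) (r : ℝ), dist p c = r ∧ dist q c = r ∧
    ∀ s ∈ S, s ≠ p → s ≠ q → r < dist s c

/-- The Delaunay triangulation of `S` viewed as a graph on the plane
(vertices outside `S` are isolated). -/
def DelaunayGraph (S : Set Pt) : SimpleGraph Pt where
  Adj p q := p ≠ q ∧ p ∈ S ∧ q ∈ S ∧ EmptyCircle S p q
  symm := ⟨by
    rintro p q ⟨hne, hp, hq, c, r, h1, h2, h3⟩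
    exact ⟨hne.symm, hq, hp, c, r, h2, h1, fun s hs h1' h2' => h3 s hs h2' h1'⟩⟩
  loopless := ⟨fun p h => h.1 rfl⟩

/-- `p` is a vertex of the convex hull of `S`. -/
def HullVertex (S : Set Pt) (p : Pt) : Prop :=
  p ∈ S ∧ p ∉ convexHull ℝ (S \ {p})

/-- Delaunay depth of a point of `S`: one plus the graph distance in the
Delaunay triangulation to the set of convex-hull vertices. -/
def delaunayDepth (S : Set Pt) (p : Pt) : ℕ :=
  1 + sInf {d : ℕ | ∃ h : Pt, HullVertex S h ∧ (DelaunayGraph S).dist p h = d}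

/-- Delaunay depth of a query point `p` relative to `S`: its depth in `S ∪ {p}`. -/
def relDepth (S : Set Pt) (p : Pt) : ℕ := delaunayDepth (insert p S) p

/-- The segment corresponding to an (unordered) edge. -/
def edgeSeg (e : Sym2 Pt) : Set Pt :=
  Sym2.lift ⟨fun a b => segment ℝ a b, fun a b => segment_symm ℝ a b⟩ e

/-- The closed polygonal curve drawn by a closed walk of the graph. -/
def walkCurve {G : SimpleGraph Pt} {p : Pt} (w : G.Walk p p) : Set Pt :=
  ⋃ e ∈ w.edges, edgeSeg e

/-- `x` lies in the bounded open region enclosed by the curve. -/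
def InsideCurve (curve : Set Pt) (x : Pt) : Prop :=
  x ∉ curve ∧ Bornology.IsBounded (connectedComponentIn curveᶜ x)


local notation "⟪" x ", " y "⟫" => @inner ℝ Pt _ x y


lemma expand_sq (u d : Pt) (α : ℝ) :
    ‖u + α • d‖ ^ 2 = ‖u‖ ^ 2 + 2 * α * ⟪u, d⟫ + α ^ 2 * ‖d‖ ^ 2 := by
  rw [← real_inner_self_eq_norm_sq, ← real_inner_self_eq_norm_sq, ← real_inner_self_eq_norm_sq]
  rw [inner_add_add_self]
  simp only [real_inner_smul_left, real_inner_smul_right]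
  rw [real_inner_comm u d]
  ring

lemma dist_sq (p q : Pt) : dist p q ^ 2 = ‖p - q‖ ^ 2 := by rw [dist_eq_norm]

lemma eq_of_sq_eq {a b : ℝ} (ha : 0 ≤ a) (hb : 0 ≤ b) (h : a ^ 2 = b ^ 2) : a = b := by
  nlinarith [sq_nonneg (a - b), sq_nonneg (a + b)]

/-- Tangent circle construction. -/
lemma tangent_circle {c b x : Pt} {r : ℝ} (hb : dist b c = r) (hx : dist x c < r)
    (hxb : x ≠ b) :
    ∃ (c' : Pt) (t : ℝ), dist x c' = t ∧ dist b c' = t ∧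
      ∀ s : Pt, s ≠ b → r ≤ dist s c → t < dist s c' := by
  have hr : 0 < r := lt_of_le_of_lt dist_nonneg hx
  have hrne : r ≠ 0 := hr.ne'
  set d : Pt := c - b with hd_def
  have hd : ‖d‖ = r := by rw [hd_def, ← dist_eq_norm, dist_comm]; exact hb
  have hxbne : (0:ℝ) < ‖x - b‖ := by rw [norm_pos_iff]; exact sub_ne_zero_of_ne hxb
  set e : ℝ := ⟪x - b, d⟫ with he_def
  have hxc : x - c = (x - b) + (-1 : ℝ) • d := by rw [hd_def]; module
  have hkey : ‖x - b‖ ^ 2 < 2 * e := by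
    have h1 : dist x c ^ 2 < r ^ 2 := by nlinarith [dist_nonneg (x := x) (y := c)]
    rw [dist_sq, hxc, expand_sq, ← he_def] at h1
    rw [hd] at h1; nlinarith
  have he : 0 < e := by nlinarith
  set t : ℝ := ‖x - b‖ ^ 2 * r / (2 * e) with ht_def
  have ht0 : 0 < t := by positivity
  have htr : t < r := by
    rw [ht_def, div_lt_iff₀ (by positivity)]; nlinarith
  have hα : (t / r) * (2 * e) = ‖x - b‖ ^ 2 := by rw [ht_def]; field_simp
  have ht2 : (t / r) ^ 2 * r ^ 2 = t ^ 2 := by field_simp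
  set c' : Pt := b + (t / r) • d with hc'_def
  have ha0 : 0 < t / r := div_pos ht0 hr
  have ha1 : t / r < 1 := (div_lt_one hr).mpr htr
  refine ⟨c', t, ?_, ?_, ?_⟩
  · apply eq_of_sq_eq dist_nonneg ht0.le
    rw [dist_sq]
    have hxc' : x - c' = (x - b) + (-(t / r)) • d := by rw [hc'_def]; module
    rw [hxc', expand_sq, ← he_def, hd]
    linear_combination ht2 - hα
  · apply eq_of_sq_eq dist_nonneg ht0.le
    rw [dist_sq]
    have hbc' : b - c' = (0 : Pt) + (-(t / r)) • d := by rw [hc'_def]; module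
    rw [hbc', expand_sq, hd]
    simp only [norm_zero, inner_zero_left]
    linear_combination ht2
  · intro s hsb hs
    have hs2 : r ^ 2 ≤ dist s c ^ 2 := by nlinarith [dist_nonneg (x := s) (y := c)]
    have hsc : s - c = (s - b) + (-1 : ℝ) • d := by rw [hd_def]; module
    rw [dist_sq, hsc, expand_sq, hd] at hs2
    have hI : 2 * ⟪s - b, d⟫ ≤ ‖s - b‖ ^ 2 := by nlinarith
    have hsbne : (0:ℝ) < ‖s - b‖ := by rw [norm_pos_iff]; exact sub_ne_zero_of_ne hsb
    have hsb2 : (0:ℝ) < ‖s - b‖ ^ 2 := by positivity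
    have hsc' : s - c' = (s - b) + (-(t / r)) • d := by rw [hc'_def]; module
    have hd2 : dist s c' ^ 2 = ‖s - b‖ ^ 2 + 2 * (-(t / r)) * ⟪s - b, d⟫
        + (-(t / r)) ^ 2 * r ^ 2 := by rw [dist_sq, hsc', expand_sq, hd]
    have hp1 : (t / r) * (2 * ⟪s - b, d⟫) ≤ (t / r) * ‖s - b‖ ^ 2 :=
      mul_le_mul_of_nonneg_left hI ha0.le
    have hp2 : (t / r) * ‖s - b‖ ^ 2 < 1 * ‖s - b‖ ^ 2 :=
      mul_lt_mul_of_pos_right ha1 hsb2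
    refine lt_of_pow_lt_pow_left₀ 2 dist_nonneg ?_
    have hfin : dist s c' ^ 2 - t ^ 2 = ‖s - b‖ ^ 2 - (t / r) * (2 * ⟪s - b, d⟫) := by
      rw [hd2]; linear_combination ht2
    linarith [hp1, hp2, hfin]
/-- Points inside (or on) the circle with diameter `ab` are closer to both `a` and `b`. -/
lemma diam_circle {a b s : Pt} (hsa : s ≠ a) (hsb : s ≠ b)
    (hle : dist s (a + (2⁻¹ : ℝ) • (b - a)) ≤ dist a b / 2) :
    dist s a < dist a b ∧ dist s b < dist a b := by
  set c : Pt := a + (2⁻¹ : ℝ) • (b - a) with hc_def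
  set u : Pt := s - a with hu_def
  set v : Pt := b - a with hv_def
  have hsc : s - c = u + (-(2⁻¹ : ℝ)) • v := by rw [hc_def, hu_def, hv_def]; module
  have hsbv : s - b = u + (-1 : ℝ) • v := by rw [hu_def, hv_def]; module
  have hab : dist a b = ‖v‖ := by rw [dist_eq_norm, hv_def, ← norm_neg]; congr 1; module
  have hune : (0:ℝ) < ‖u‖ := by
    rw [norm_pos_iff, hu_def]; exact sub_ne_zero_of_ne hsa
  have hubv : (0:ℝ) < ‖u + (-1 : ℝ) • v‖ := by
    rw [norm_pos_iff, ← hsbv]; exact sub_ne_zero_of_ne hsb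
  have h1 : dist s c ^ 2 ≤ (‖v‖ / 2) ^ 2 := by
    rw [hab] at hle
    nlinarith [dist_nonneg (x := s) (y := c), norm_nonneg v]
  rw [dist_sq, hsc, expand_sq] at h1
  -- h1 : ‖u‖² - ⟪u,v⟫ + ‖v‖²/4 ≤ ‖v‖²/4  ⇒  ⟪u,v⟫ ≥ ‖u‖²
  have hiuv : ‖u‖ ^ 2 ≤ ⟪u, v⟫ := by nlinarith
  have hsb2 : ‖u + (-1 : ℝ) • v‖ ^ 2 = ‖u‖ ^ 2 - 2 * ⟪u, v⟫ + ‖v‖ ^ 2 := by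
    rw [expand_sq]; ring
  constructor
  · rw [dist_eq_norm, hab, ← hu_def]
    refine lt_of_pow_lt_pow_left₀ 2 (norm_nonneg _) ?_
    nlinarith [sq_nonneg (‖u + (-1 : ℝ) • v‖)]
  · rw [dist_eq_norm, hab, hsbv]
    refine lt_of_pow_lt_pow_left₀ 2 (norm_nonneg _) ?_
    nlinarith
lemma inner_coords (u w : Pt) : ⟪u, w⟫ = u 0 * w 0 + u 1 * w 1 := by
  simp [PiLp.inner_apply, Fin.sum_univ_two, RCLike.inner_apply, mul_comm]

lemma sub_coords (u w : Pt) (i : Fin 2) : (u - w) i = u i - w i := rfl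

def perpv (v : Pt) : Pt := WithLp.toLp 2 ![-(v 1), v 0]

lemma perp_inner (v : Pt) : ⟪v, perpv v⟫ = 0 := by
  rw [inner_coords]; simp [perpv]; ring

/-- Three distinct points on a circle: `x - a` is not orthogonal to the
perpendicular of `b - a`. -/
lemma not_perp {a b x c : Pt} {r : ℝ} (ha : dist a c = r) (hb : dist b c = r)
    (hx : dist x c = r) (hxa : x ≠ a) (hxb : x ≠ b) (hab : a ≠ b) :
    ⟪x - a, perpv (b - a)⟫ ≠ 0 := by
  intro h0
  set v : Pt := b - a with hv_def
  have hvne : v ≠ 0 := sub_ne_zero_of_ne (fun h => hab h.symm)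
  rw [inner_coords] at h0
  simp only [perpv, WithLp.ofLp_toLp, Matrix.cons_val_zero, Matrix.cons_val_one, Matrix.head_cons] at h0
  -- h0 : (x-a)0 * (-(v 1)) + (x-a)1 * (v 0) = 0
  have hkey : (x - a) 0 * v 1 = (x - a) 1 * v 0 := by linarith
  -- produce β with x - a = β • v
  have hv01 : v 0 ≠ 0 ∨ v 1 ≠ 0 := by
    by_contra h; push_neg at h
    apply hvne; ext i; fin_cases i <;> simp [h.1, h.2]
  obtain ⟨β, hβ⟩ : ∃ β : ℝ, x = a + β • v := by
    rcases hv01 with h | h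
    · refine ⟨(x - a) 0 / v 0, ?_⟩
      ext i; fin_cases i
      · show x 0 = a 0 + (x - a) 0 / v 0 * v 0
        field_simp [sub_coords]
        simp [sub_coords]
      · show x 1 = a 1 + (x - a) 0 / v 0 * v 1
        rw [div_mul_eq_mul_div, hkey, mul_div_assoc, div_self h]
        simp [sub_coords]
    · refine ⟨(x - a) 1 / v 1, ?_⟩
      ext i; fin_cases i
      · show x 0 = a 0 + (x - a) 1 / v 1 * v 0
        rw [div_mul_eq_mul_div, ← hkey, mul_div_assoc, div_self h]
        simp [sub_coords]
      · show x 1 = a 1 + (x - a) 1 / v 1 * v 1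
        field_simp [sub_coords]
        simp [sub_coords]
  have hvpos : (0:ℝ) < ‖v‖ ^ 2 := pow_pos (norm_pos_iff.mpr hvne) 2
  have hb2 : 2 * ⟪a - c, v⟫ + ‖v‖ ^ 2 = 0 := by
    have : dist b c ^ 2 = r ^ 2 := by rw [hb]
    rw [dist_sq, show b - c = (a - c) + (1:ℝ) • v by rw [hv_def]; module, expand_sq] at this
    have ha2 : ‖a - c‖ ^ 2 = r ^ 2 := by rw [← dist_sq, ha]
    nlinarith
  have hx2 : 2 * β * ⟪a - c, v⟫ + β ^ 2 * ‖v‖ ^ 2 = 0 := by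
    have : dist x c ^ 2 = r ^ 2 := by rw [hx]
    rw [dist_sq, show x - c = (a - c) + β • v by rw [hβ]; module, expand_sq] at this
    have ha2 : ‖a - c‖ ^ 2 = r ^ 2 := by rw [← dist_sq, ha]
    nlinarith
  have hβ01 : β = 0 ∨ β = 1 := by
    have : β * (β - 1) * ‖v‖ ^ 2 = 0 := by linear_combination hx2 - β * hb2
    rcases mul_eq_zero.mp this with h | h
    · rcases mul_eq_zero.mp h with h | h
      · exact Or.inl h
      · exact Or.inr (by linarith)
    · exact absurd h hvpos.ne'
  rcases hβ01 with h | h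
  · exact hxa (by rw [hβ, h]; simp)
  · exact hxb (by rw [hβ, h, hv_def]; module)
/-- If a Delaunay edge of `S` is destroyed by inserting `x`, there is a witness
circle with `x` strictly inside. -/
lemma strict_inside {S : Set Pt} (hfin : S.Finite) {a b x : Pt} (haS : a ∈ S)
    (hxS : x ∉ S) (hab : a ≠ b) (hec : EmptyCircle S a b)
    (hnot : ¬ EmptyCircle (insert x S) a b) :
    ∃ (c : Pt) (r : ℝ), dist a c = r ∧ dist b c = r ∧ dist x c < r ∧
      ∀ s ∈ S, s ≠ a → s ≠ b → r < dist s c := by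
  obtain ⟨c, r, ha, hb, hS⟩ := hec
  have hxa : x ≠ a := fun h => hxS (h ▸ haS)
  rcases lt_trichotomy (dist x c) r with hlt | heq | hgt
  · exact ⟨c, r, ha, hb, hlt, hS⟩
  · exfalso
    -- perturb the circle to exclude x, contradicting `hnot`
    have hxb : x ≠ b := by
      rintro rfl; exact hnot ⟨c, r, ha, hb, fun s hs h1 h2 => by
        rcases hs with rfl | hs
        · exact absurd rfl h2
        · exact hS s hs h1 h2⟩
    set v : Pt := b - a with hv_def
    set w : Pt := perpv v with hw_def
    have hvw : ⟪v, w⟫ = 0 := perp_inner v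
    have hip : ⟪x - a, w⟫ ≠ 0 := not_perp ha hb heq hxa hxb hab
    have hr0 : 0 ≤ r := ha ▸ dist_nonneg
    classical
    set F : Finset Pt := hfin.toFinset with hF_def
    have hFne : F.Nonempty := ⟨a, hfin.mem_toFinset.mpr haS⟩
    set g : Pt → ℝ := fun s =>
      if s = a ∨ s = b then 1
      else (dist s c ^ 2 - r ^ 2) / (2 * |⟪s - a, w⟫| + 1) with hg_def
    have hgpos : ∀ s ∈ F, 0 < g s := by
      intro s hs
      simp only [hg_def]
      by_cases h : s = a ∨ s = b
      · rw [if_pos h]; norm_num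
      · push_neg at h
        rw [if_neg (by tauto)]
        have hss : s ∈ S := hfin.mem_toFinset.mp hs
        have := hS s hss h.1 h.2
        have hnum : 0 < dist s c ^ 2 - r ^ 2 := by nlinarith
        have hden : 0 < 2 * |⟪s - a, w⟫| + 1 := by positivity
        exact div_pos hnum hden
    set δ : ℝ := F.inf' hFne g with hδ_def
    have hδpos : 0 < δ := by
      rw [hδ_def, Finset.lt_inf'_iff]; exact hgpos
    set ε : ℝ := if 0 < ⟪x - a, w⟫ then -δ else δ with hε_def
    have hsign : ε * ⟪x - a, w⟫ < 0 := by
      rw [hε_def]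
      rcases lt_trichotomy 0 ⟪x - a, w⟫ with h | h | h
      · rw [if_pos h]; nlinarith
      · exact absurd h.symm hip
      · rw [if_neg (by linarith)]; nlinarith
    have habs : |ε| = δ := by
      rw [hε_def]; split <;> simp [abs_of_pos hδpos, abs_of_neg (neg_neg_iff_pos.mpr hδpos)]
    have hmag : ∀ s ∈ S, s ≠ a → s ≠ b →
        2 * (ε * ⟪s - a, w⟫) < dist s c ^ 2 - r ^ 2 := by
      intro s hsS hsa hsb
      set I : ℝ := ⟪s - a, w⟫ with hI_def
      set D : ℝ := dist s c ^ 2 - r ^ 2 with hD_def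
      have hD : 0 < D := by
        have := hS s hsS hsa hsb
        rw [hD_def]; nlinarith
      have hden : (0:ℝ) < 2 * |I| + 1 := by positivity
      have h2 : δ ≤ D / (2 * |I| + 1) := by
        have h5 : δ ≤ g s := Finset.inf'_le g (hfin.mem_toFinset.mpr hsS)
        have h6 : g s = D / (2 * |I| + 1) := by
          simp only [hg_def]; rw [if_neg (by tauto)]
        rwa [h6] at h5
      have h1 : ε * I ≤ δ * |I| := by
        calc ε * I ≤ |ε * I| := le_abs_self _
        _ = δ * |I| := by rw [abs_mul, habs]
      have h3 : δ * |I| ≤ D / (2 * |I| + 1) * |I| :=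
        mul_le_mul_of_nonneg_right h2 (abs_nonneg I)
      have h4 : 2 * (D / (2 * |I| + 1) * |I|) < D := by
        rw [show 2 * (D / (2 * |I| + 1) * |I|) = 2 * D * |I| / (2 * |I| + 1) by ring,
          div_lt_iff₀ hden]
        nlinarith [abs_nonneg I]
      linarith
    apply hnot
    set cε : Pt := c + ε • w with hcε_def
    set rε : ℝ := dist a cε with hrε_def
    have hexp : ∀ s : Pt, dist s cε ^ 2
        = dist s c ^ 2 - 2 * ε * ⟪s - c, w⟫ + ε ^ 2 * ‖w‖ ^ 2 := by
      intro s
      rw [dist_sq, show s - cε = (s - c) + (-ε) • w by rw [hcε_def]; module, expand_sq,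
        ← dist_sq]
      ring
    have hsub : ∀ s : Pt, ⟪s - c, w⟫ - ⟪a - c, w⟫ = ⟪s - a, w⟫ := by
      intro s
      rw [← inner_sub_left]
      congr 1
      module
    have hbε : dist b cε = rε := by
      apply eq_of_sq_eq dist_nonneg dist_nonneg
      rw [hexp, hexp]
      have h1 : ⟪b - c, w⟫ - ⟪a - c, w⟫ = ⟪b - a, w⟫ := hsub b
      have hba : ⟪b - a, w⟫ = 0 := by rw [← hv_def]; exact hvw
      have hb2 : dist b c ^ 2 = r ^ 2 := by rw [hb]
      have ha2 : dist a c ^ 2 = r ^ 2 := by rw [ha]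
      rw [hb2, ha2]
      linear_combination (-2 * ε) * h1 + (-2 * ε) * hba
    refine ⟨cε, rε, rfl, hbε, ?_⟩
    intro s hs hsa hsb
    have key : ∀ s : Pt, dist s cε ^ 2 - rε ^ 2
        = dist s c ^ 2 - r ^ 2 - 2 * (ε * ⟪s - a, w⟫) := by
      intro s
      have h1 := hexp s
      have h2 := hexp a
      have ha2 : dist a c ^ 2 = r ^ 2 := by rw [ha]
      have h3 := hsub s
      rw [hrε_def]
      linear_combination h1 - h2 - ha2 + (-2 * ε) * h3
    refine lt_of_pow_lt_pow_left₀ 2 dist_nonneg ?_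
    have hk := key s
    rcases Set.mem_insert_iff.mp hs with rfl | hsS
    · have hz : dist s c ^ 2 - r ^ 2 = 0 := by rw [heq]; ring
      linarith [hk, hz, hsign]
    · linarith [hk, hmag s hsS hsa hsb]
  · exfalso
    exact hnot ⟨c, r, ha, hb, fun s hs h1 h2 => by
      rcases hs with rfl | hs
      · exact hgt
      · exact hS s hs h1 h2⟩
lemma mid_dist_left (a b : Pt) : dist a (a + (2⁻¹:ℝ) • (b - a)) = dist a b / 2 := by
  have h : a - (a + (2⁻¹:ℝ) • (b - a)) = (-(2⁻¹):ℝ) • (b - a) := by module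
  rw [dist_eq_norm, h, norm_smul, dist_eq_norm, ← norm_neg (a - b)]
  have : -(a - b) = b - a := by module
  rw [this]; norm_num; ring

lemma mid_dist_right (a b : Pt) : dist b (a + (2⁻¹:ℝ) • (b - a)) = dist a b / 2 := by
  have h : b - (a + (2⁻¹:ℝ) • (b - a)) = ((2⁻¹):ℝ) • (b - a) := by module
  rw [dist_eq_norm, h, norm_smul, dist_eq_norm, ← norm_neg (a - b)]
  have : -(a - b) = b - a := by module
  rw [this]; norm_num; ring

/-- A destroyed Delaunay edge makes its far endpoint adjacent to the new point. -/
lemma destroyed_adj {S : Set Pt} (hfin : S.Finite) {x v y : Pt} (hxS : x ∉ S)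
    (hadj : (DelaunayGraph S).Adj v y)
    (hnot : ¬ (DelaunayGraph (insert x S)).Adj v y) :
    (DelaunayGraph (insert x S)).Adj x y := by
  obtain ⟨hne, hvS, hyS, hec⟩ := hadj
  have hnec : ¬ EmptyCircle (insert x S) v y := fun h =>
    hnot ⟨hne, Or.inr hvS, Or.inr hyS, h⟩
  obtain ⟨c, r, hvc, hyc, hx, hemp⟩ := strict_inside hfin hvS hxS hne hec hnec
  have hxy : x ≠ y := fun h => hxS (h ▸ hyS)
  obtain ⟨c', t, h1, h2, h3⟩ := tangent_circle hyc hx hxy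
  refine ⟨hxy, Or.inl rfl, Or.inr hyS, c', t, h1, h2, ?_⟩
  intro s hs hsx hsy
  rcases Set.mem_insert_iff.mp hs with rfl | hsS
  · exact absurd rfl hsx
  apply h3 s hsy
  by_cases hsv : s = v
  · rw [hsv, hvc]
  · exact (hemp s hsS hsv hsy).le

/-- Every point outside `S` is Delaunay-adjacent (in `insert x S`) to its
nearest neighbour in `S`. -/
lemma nearest_adj {S : Set Pt} (hfin : S.Finite) (hSne : S.Nonempty) {x : Pt}
    (hxS : x ∉ S) : ∃ q ∈ S, (DelaunayGraph (insert x S)).Adj x q := by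
  obtain ⟨p, hp⟩ := hSne
  obtain ⟨q, hqF, hmin⟩ := hfin.toFinset.exists_min_image (fun s => dist x s)
    ⟨p, hfin.mem_toFinset.mpr hp⟩
  have hqS : q ∈ S := hfin.mem_toFinset.mp hqF
  have hxq : x ≠ q := fun h => hxS (h ▸ hqS)
  refine ⟨q, hqS, hxq, Or.inl rfl, Or.inr hqS,
    x + (2⁻¹:ℝ) • (q - x), dist x q / 2, mid_dist_left x q, mid_dist_right x q, ?_⟩
  intro s hs hsx hsq
  rcases Set.mem_insert_iff.mp hs with rfl | hsS
  · exact absurd rfl hsx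
  by_contra hle
  push_neg at hle
  obtain ⟨h1, _⟩ := diam_circle hsx hsq hle
  have := hmin s (hfin.mem_toFinset.mpr hsS)
  rw [dist_comm] at h1
  linarith

/-- The Delaunay graph is connected on `S`. -/
lemma delaunay_reach {S : Set Pt} (hfin : S.Finite) :
    ∀ a ∈ S, ∀ b ∈ S, (DelaunayGraph S).Reachable a b := by
  intro a haS b hbS
  by_contra hreach
  set G := DelaunayGraph S with hG
  set A : Set Pt := {z ∈ S | G.Reachable a z} with hA
  have hAfin : A.Finite := hfin.subset (sep_subset _ _)
  have hBfin : (S \ A).Finite := hfin.subset diff_subset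
  have hbB : b ∈ S \ A := ⟨hbS, fun h => hreach h.2⟩
  have haA : a ∈ A := ⟨haS, SimpleGraph.Reachable.refl a⟩
  obtain ⟨⟨a₀, b₀⟩, hmem, hmin⟩ := (hAfin.toFinset ×ˢ hBfin.toFinset).exists_min_image
    (fun pq => dist pq.1 pq.2)
    ⟨(a, b), Finset.mem_product.mpr ⟨hAfin.mem_toFinset.mpr haA, hBfin.mem_toFinset.mpr hbB⟩⟩
  rw [Finset.mem_product, hAfin.mem_toFinset, hBfin.mem_toFinset] at hmem
  obtain ⟨ha₀, hb₀⟩ := hmem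
  have ha₀S : a₀ ∈ S := ha₀.1
  have hb₀S : b₀ ∈ S := hb₀.1
  have hne : a₀ ≠ b₀ := fun h => hb₀.2 (h ▸ ha₀)
  have hadj : G.Adj a₀ b₀ := by
    refine ⟨hne, ha₀S, hb₀S, a₀ + (2⁻¹:ℝ) • (b₀ - a₀), dist a₀ b₀ / 2,
      mid_dist_left a₀ b₀, mid_dist_right a₀ b₀, ?_⟩
    intro s hsS hsa hsb
    by_contra hle
    push_neg at hle
    obtain ⟨h1, h2⟩ := diam_circle hsa hsb hle
    by_cases hsA : s ∈ A
    · have := hmin (s, b₀) (Finset.mem_product.mpr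
        ⟨hAfin.mem_toFinset.mpr hsA, hBfin.mem_toFinset.mpr hb₀⟩)
      linarith
    · have := hmin (a₀, s) (Finset.mem_product.mpr
        ⟨hAfin.mem_toFinset.mpr ha₀, hBfin.mem_toFinset.mpr ⟨hsS, hsA⟩⟩)
      rw [dist_comm] at h1
      linarith
  exact hb₀.2 ⟨hb₀S, ha₀.2.trans hadj.reachable⟩

lemma reach_dist_tri {V : Type*} {G : SimpleGraph V} {u v w : V}
    (h1 : G.Reachable u v) (h2 : G.Reachable v w) :
    G.dist u w ≤ G.dist u v + G.dist v w := by
  obtain ⟨p, hp⟩ := h1.exists_walk_length_eq_dist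
  obtain ⟨q, hq⟩ := h2.exists_walk_length_eq_dist
  rw [← hp, ← hq, ← SimpleGraph.Walk.length_append]
  exact SimpleGraph.dist_le _
def Dset (S : Set Pt) (p : Pt) : Set ℕ :=
  {d : ℕ | ∃ h : Pt, HullVertex S h ∧ (DelaunayGraph S).dist p h = d}

lemma depth_eq (S : Set Pt) (p : Pt) : delaunayDepth S p = 1 + sInf (Dset S p) := rfl

/-- Intermediate vertices along a walk realize intermediate distances. -/
lemma walk_mid {S : Set Pt} {p h : Pt} (w : (DelaunayGraph S).Walk p h) :
    p ∈ S → ∀ k : ℕ, k ≤ w.length →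
    ∃ v : Pt, v ∈ S ∧ (DelaunayGraph S).Reachable p v ∧
      (DelaunayGraph S).dist v h ≤ k ∧ (DelaunayGraph S).dist p v ≤ w.length - k := by
  induction w with
  | @nil u =>
    intro hu k _
    exact ⟨u, hu, SimpleGraph.Reachable.refl u, by simp [SimpleGraph.dist_self],
      by simp [SimpleGraph.dist_self]⟩
  | @cons u y hh hadj w' ih =>
    intro hu k hk
    rw [SimpleGraph.Walk.length_cons] at hk
    by_cases hk' : k ≤ w'.length
    · obtain ⟨v, hvS, hrv, hd1, hd2⟩ := ih hadj.2.2.1 k hk'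
      refine ⟨v, hvS, hadj.reachable.trans hrv, hd1, ?_⟩
      have htri := reach_dist_tri hadj.reachable hrv
      have h1 : (DelaunayGraph S).dist u y ≤ 1 :=
        le_trans (SimpleGraph.dist_le (SimpleGraph.Walk.cons hadj SimpleGraph.Walk.nil))
          (by simp)
      rw [SimpleGraph.Walk.length_cons]
      omega
    · refine ⟨u, hu, SimpleGraph.Reachable.refl u, ?_, by simp [SimpleGraph.dist_self]⟩
      have := SimpleGraph.dist_le (SimpleGraph.Walk.cons hadj w')
      rw [SimpleGraph.Walk.length_cons] at this
      omega

/-- Walking from `q` towards the hull, the new point `x` stays close in the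
new Delaunay graph. -/
lemma push {S : Set Pt} (hfin : S.Finite) {x : Pt} (hxS : x ∉ S) {v h : Pt}
    (w : (DelaunayGraph S).Walk v h) :
    ∀ n : ℕ, (DelaunayGraph (insert x S)).Reachable x v →
      (DelaunayGraph (insert x S)).dist x v ≤ n →
      (DelaunayGraph (insert x S)).Reachable x h ∧
        (DelaunayGraph (insert x S)).dist x h ≤ n + w.length := by
  induction w with
  | nil => intro n hr hd; exact ⟨hr, by simpa using hd⟩
  | @cons u y hh hadj w' ih =>
    intro n hr hd
    rw [SimpleGraph.Walk.length_cons]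
    by_cases hvy : (DelaunayGraph (insert x S)).Adj u y
    · have hry : (DelaunayGraph (insert x S)).Reachable x y := hr.trans hvy.reachable
      have hdy : (DelaunayGraph (insert x S)).dist x y ≤ n + 1 := by
        have htri := reach_dist_tri hr hvy.reachable
        have h1 : (DelaunayGraph (insert x S)).dist u y ≤ 1 :=
          le_trans (SimpleGraph.dist_le (SimpleGraph.Walk.cons hvy SimpleGraph.Walk.nil))
            (by simp)
        omega
      obtain ⟨hr', hd'⟩ := ih (n + 1) hry hdy
      exact ⟨hr', by omega⟩
    · have hxadj := destroyed_adj hfin hxS hadj hvy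
      have hry : (DelaunayGraph (insert x S)).Reachable x y := hxadj.reachable
      have hdy : (DelaunayGraph (insert x S)).dist x y ≤ n + 1 := by
        have h1 : (DelaunayGraph (insert x S)).dist x y ≤ 1 :=
          le_trans (SimpleGraph.dist_le (SimpleGraph.Walk.cons hxadj SimpleGraph.Walk.nil))
            (by simp)
        omega
      obtain ⟨hr', hd'⟩ := ih (n + 1) hry hdy
      exact ⟨hr', by omega⟩

/-- A finite nonempty planar set has a hull vertex. -/
lemma exists_hull {S : Set Pt} (hfin : S.Finite) (hne : S.Nonempty) :
    ∃ p : Pt, HullVertex S p := by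
  classical
  set F : Finset Pt := hfin.toFinset with hF_def
  obtain ⟨p₀, hp₀⟩ := hne
  have hFne : F.Nonempty := ⟨p₀, hfin.mem_toFinset.mpr hp₀⟩
  obtain ⟨m₀, hm₀F, hm₀max⟩ := F.exists_max_image (fun z => z 0) hFne
  set T : Finset Pt := F.filter (fun z => z 0 = m₀ 0) with hT_def
  have hTne : T.Nonempty := ⟨m₀, Finset.mem_filter.mpr ⟨hm₀F, rfl⟩⟩
  obtain ⟨p, hpT, hpmax⟩ := T.exists_max_image (fun z => z 1) hTne
  have hpF : p ∈ F := (Finset.mem_filter.mp hpT).1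
  have hp0 : p 0 = m₀ 0 := (Finset.mem_filter.mp hpT).2
  have hpS : p ∈ S := hfin.mem_toFinset.mp hpF
  refine ⟨p, hpS, ?_⟩
  intro hcon
  have hKfin : (S \ {p}).Finite := hfin.subset diff_subset
  rw [← hKfin.coe_toFinset, Finset.convexHull_eq] at hcon
  obtain ⟨wt, hwt0, hwt1, hcm⟩ := hcon
  rw [Finset.centerMass_eq_of_sum_1 _ _ hwt1] at hcm
  set Kf : Finset Pt := hKfin.toFinset with hKf_def
  have hKmem : ∀ y ∈ Kf, y ∈ S ∧ y ≠ p := by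
    intro y hy
    have := hKfin.mem_toFinset.mp hy
    exact ⟨this.1, fun h => this.2 (h ▸ rfl)⟩
  have happ : ∀ i : Fin 2, (∑ y ∈ Kf, wt y • id y) i = ∑ y ∈ Kf, wt y * y i := by
    intro i
    rw [WithLp.ofLp_sum, Finset.sum_apply]
    rfl
  have hp0' : p 0 = ∑ y ∈ Kf, wt y * y 0 := by rw [← happ, hcm]
  have hp1' : p 1 = ∑ y ∈ Kf, wt y * y 1 := by rw [← happ, hcm]
  have hy0le : ∀ y ∈ Kf, y 0 ≤ p 0 := by
    intro y hy
    rw [hp0]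
    exact hm₀max y (hfin.mem_toFinset.mpr (hKmem y hy).1)
  -- every positively weighted point has first coordinate p 0
  have hcoord : ∀ y ∈ Kf, wt y ≠ 0 → y 0 = p 0 := by
    by_contra hcon'
    push_neg at hcon'
    obtain ⟨y₀, hy₀, hwy₀, hy₀ne⟩ := hcon'
    have hy₀lt : y₀ 0 < p 0 := lt_of_le_of_ne (hy0le y₀ hy₀) hy₀ne
    have hwy₀pos : 0 < wt y₀ := lt_of_le_of_ne (hwt0 y₀ hy₀) (Ne.symm hwy₀)
    have hsum : ∑ y ∈ Kf, wt y * y 0 < ∑ y ∈ Kf, wt y * p 0 := by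
      refine Finset.sum_lt_sum (fun i hi => ?_) ⟨y₀, hy₀, ?_⟩
      · exact mul_le_mul_of_nonneg_left (hy0le i hi) (hwt0 i hi)
      · exact mul_lt_mul_of_pos_left hy₀lt hwy₀pos
    rw [← Finset.sum_mul, hwt1, one_mul] at hsum
    rw [hp0'] at hsum
    exact lt_irrefl _ (hsum.trans_le (le_of_eq rfl))
  -- every positively weighted point has second coordinate < p 1
  have hcoord1 : ∀ y ∈ Kf, wt y ≠ 0 → y 1 < p 1 := by
    intro y hy hwy
    have hyT : y ∈ T := Finset.mem_filter.mpr
      ⟨hfin.mem_toFinset.mpr (hKmem y hy).1, by rw [hcoord y hy hwy, hp0]⟩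
    have hle := hpmax y hyT
    rcases lt_or_eq_of_le hle with h | h
    · exact h
    · exfalso
      apply (hKmem y hy).2
      ext i
      fin_cases i
      · show y 0 = p 0
        rw [hcoord y hy hwy]
      · show y 1 = p 1
        exact h
  obtain ⟨y₀, hy₀, hwy₀⟩ : ∃ y ∈ Kf, wt y ≠ 0 := by
    by_contra hall
    push_neg at hall
    rw [Finset.sum_eq_zero hall] at hwt1
    norm_num at hwt1
  have hsum : ∑ y ∈ Kf, wt y * y 1 < ∑ y ∈ Kf, wt y * p 1 := by
    refine Finset.sum_lt_sum (fun i hi => ?_) ⟨y₀, hy₀, ?_⟩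
    · by_cases hwi : wt i = 0
      · rw [hwi]; simp
      · exact mul_le_mul_of_nonneg_left (hcoord1 i hi hwi).le (hwt0 i hi)
    · exact mul_lt_mul_of_pos_left (hcoord1 y₀ hy₀ hwy₀)
        (lt_of_le_of_ne (hwt0 y₀ hy₀) (Ne.symm hwy₀))
  rw [← Finset.sum_mul, hwt1, one_mul, ← hp1'] at hsum
  exact lt_irrefl _ hsum

/-- Hull vertices of `S` remain hull vertices after inserting a point of the hull. -/
lemma hull_pres {S : Set Pt} {x h : Pt} (hx : x ∈ convexHull ℝ S) (hxS : x ∉ S)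
    (hh : HullVertex S h) : HullVertex (insert x S) h := by
  obtain ⟨hhS, hhcon⟩ := hh
  refine ⟨Or.inr hhS, ?_⟩
  intro hcon
  have hxh : x ≠ h := fun e => hxS (e ▸ hhS)
  have hset : (insert x S) \ {h} = insert x (S \ {h}) := by
    ext z
    simp only [Set.mem_diff, Set.mem_insert_iff, Set.mem_singleton_iff]
    constructor
    · rintro ⟨hz | hz, hzh⟩
      · exact Or.inl hz
      · exact Or.inr ⟨hz, hzh⟩
    · rintro (rfl | ⟨hz, hzh⟩)
      · exact ⟨Or.inl rfl, hxh⟩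
      · exact ⟨Or.inr hz, hzh⟩
  rw [hset] at hcon
  have hKne : (S \ {h}).Nonempty := by
    rcases Set.eq_empty_or_nonempty (S \ {h}) with he | hn
    · exfalso
      have hS1 : S = {h} :=
        subset_antisymm (Set.diff_eq_empty.mp he) (Set.singleton_subset_iff.mpr hhS)
      rw [hS1, convexHull_singleton] at hx
      exact hxh hx
    · exact hn
  rw [convexHull_insert hKne, mem_convexJoin] at hcon
  obtain ⟨x', hx', y, hy, hseg⟩ := hcon
  rw [Set.mem_singleton_iff] at hx'
  rw [hx'] at hseg
  have hSrw : insert h (S \ {h}) = S := by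
    rw [Set.insert_diff_singleton]
    exact Set.insert_eq_of_mem hhS
  rw [← hSrw, convexHull_insert hKne, mem_convexJoin] at hx
  obtain ⟨h', hh', z, hz, hsegx⟩ := hx
  rw [Set.mem_singleton_iff] at hh'
  rw [hh'] at hsegx
  obtain ⟨a, b, ha, hb, hab, hcomb⟩ := hseg
  obtain ⟨γ, δ, hγ, hδ, hγδ, hcombx⟩ := hsegx
  by_cases ha0 : a = 0
  · have hyh : y = h := by
      rw [ha0] at hcomb hab
      rw [zero_add] at hab
      rw [hab] at hcomb
      simpa using hcomb
    rw [hyh] at hy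
    exact hhcon hy
  by_cases hγ1 : γ = 1
  · exfalso
    apply hxh
    have hδ0 : δ = 0 := by linarith
    rw [hγ1, hδ0] at hcombx
    simpa using hcombx.symm
  have ha' : 0 < a := lt_of_le_of_ne ha (Ne.symm ha0)
  have hγ' : γ < 1 := lt_of_le_of_ne (by linarith) hγ1
  have hc : 0 < 1 - a * γ := by nlinarith
  have h1 : a • (γ • h + δ • z) + b • y = h := by rw [hcombx]; exact hcomb
  have key : (1 - a * γ) • h = (a * δ) • z + b • y := by
    linear_combination (norm := module) -h1
  have hmem : (a * δ / (1 - a * γ)) • z + (b / (1 - a * γ)) • y ∈ convexHull ℝ (S \ {h}) := by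
    apply (convex_convexHull ℝ (S \ {h})) hz hy
    · positivity
    · positivity
    · field_simp
      linear_combination a * hγδ + hab
  have heq : h = (a * δ / (1 - a * γ)) • z + (b / (1 - a * γ)) • y := by
    have h3 := congrArg (fun t => (1 - a * γ)⁻¹ • t) key
    rw [smul_smul, inv_mul_cancel₀ hc.ne', one_smul] at h3
    rw [h3, smul_add, smul_smul, smul_smul]
    congr 1 <;> rw [div_eq_inv_mul]
  rw [← heq] at hmem
  exact hhcon hmem

/-- The number of nonempty Delaunay levels equals the maximum depth `f` of
the set, or `f + 1`. -/
theorem stmt13 (S : Set Pt) (hfin : S.Finite) (hne : S.Nonempty) (hgp : GenPos S)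
    (f : ℕ) (hf : (∃ p ∈ S, delaunayDepth S p = f) ∧ ∀ p ∈ S, delaunayDepth S p ≤ f)
    (L : ℕ) (hL : L = {j : ℕ | ∃ x : Pt, relDepth S x = j}.ncard) :
    L = f ∨ L = f + 1 := by
  classical
  obtain ⟨⟨p₀, hp₀S, hp₀f⟩, hmax⟩ := hf
  have hf1 : 1 ≤ f := by rw [depth_eq] at hp₀f; omega
  obtain ⟨h₀, hh₀⟩ := exists_hull hfin hne
  have hrelS : ∀ q ∈ S, relDepth S q = delaunayDepth S q := by
    intro q hq
    show delaunayDepth (insert q S) q = delaunayDepth S q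
    rw [Set.insert_eq_self.mpr hq]
  have hDne : ∀ q : Pt, (Dset S q).Nonempty :=
    fun q => ⟨(DelaunayGraph S).dist q h₀, h₀, hh₀, rfl⟩
  have hlev1 : relDepth S h₀ = 1 := by
    rw [hrelS h₀ hh₀.1, depth_eq]
    have h0mem : (0:ℕ) ∈ Dset S h₀ := ⟨h₀, hh₀, SimpleGraph.dist_self⟩
    rw [Nat.sInf_eq_zero.mpr (Or.inl h0mem)]
  -- all levels 1,…,f are nonempty
  have hlow : ∀ j : ℕ, 1 ≤ j → j ≤ f → ∃ x : Pt, relDepth S x = j := by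
    intro j hj1 hjf
    rcases eq_or_lt_of_le hj1 with rfl | hj2
    · exact ⟨h₀, hlev1⟩
    have hsInf : sInf (Dset S p₀) = f - 1 := by rw [depth_eq] at hp₀f; omega
    obtain ⟨h₁, hh₁, hd₁⟩ := Nat.sInf_mem (hDne p₀)
    have hreach := delaunay_reach hfin p₀ hp₀S h₁ hh₁.1
    obtain ⟨w, hw⟩ := hreach.exists_walk_length_eq_dist
    have hwlen : w.length = f - 1 := by rw [hw, hd₁, hsInf]
    obtain ⟨v, hvS, hrpv, hdvh, hdpv⟩ := walk_mid w hp₀S (j - 1) (by omega)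
    refine ⟨v, ?_⟩
    rw [hrelS v hvS, depth_eq]
    have hub : sInf (Dset S v) ≤ j - 1 :=
      le_trans (Nat.sInf_le ⟨h₁, hh₁, rfl⟩) hdvh
    have hlb : j - 1 ≤ sInf (Dset S v) := by
      obtain ⟨h₂, hh₂, hd₂⟩ := Nat.sInf_mem (hDne v)
      rw [← hd₂]
      have hp₀h₂ : f - 1 ≤ (DelaunayGraph S).dist p₀ h₂ := by
        rw [← hsInf]; exact Nat.sInf_le ⟨h₂, hh₂, rfl⟩
      have htri := reach_dist_tri hrpv (delaunay_reach hfin v hvS h₂ hh₂.1)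
      have hpv : (DelaunayGraph S).dist p₀ v ≤ (f - 1) - (j - 1) := hwlen ▸ hdpv
      omega
    omega
  -- relative depth is at most f + 1
  have hup : ∀ x : Pt, relDepth S x ≤ f + 1 := by
    intro x
    by_cases hxS : x ∈ S
    · rw [hrelS x hxS]; exact (hmax x hxS).trans (Nat.le_succ f)
    by_cases hxH : x ∈ convexHull ℝ S
    · obtain ⟨q, hqS, hadj⟩ := nearest_adj hfin hne hxS
      have hdq : 1 + sInf (Dset S q) ≤ f := by rw [← depth_eq]; exact hmax q hqS
      obtain ⟨h₁, hh₁, hd₁⟩ := Nat.sInf_mem (hDne q)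
      have hreach := delaunay_reach hfin q hqS h₁ hh₁.1
      obtain ⟨w, hw⟩ := hreach.exists_walk_length_eq_dist
      have hd'xq : (DelaunayGraph (insert x S)).dist x q ≤ 1 :=
        le_trans (SimpleGraph.dist_le (SimpleGraph.Walk.cons hadj SimpleGraph.Walk.nil))
          (by simp)
      obtain ⟨hr', hdist'⟩ := push hfin hxS w 1 hadj.reachable hd'xq
      have hh₁' : HullVertex (insert x S) h₁ := hull_pres hxH hxS hh₁
      show 1 + sInf (Dset (insert x S) x) ≤ f + 1
      have hle : sInf (Dset (insert x S) x) ≤ (DelaunayGraph (insert x S)).dist x h₁ :=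
        Nat.sInf_le ⟨h₁, hh₁', rfl⟩
      have hwl : w.length = sInf (Dset S q) := by rw [hw, hd₁]
      omega
    · have hhx : HullVertex (insert x S) x := by
        refine ⟨Set.mem_insert x S, ?_⟩
        have hseteq : (insert x S) \ {x} = S \ {x} := by
          ext z
          simp only [Set.mem_diff, Set.mem_insert_iff, Set.mem_singleton_iff]
          tauto
        rw [hseteq]
        exact fun hc => hxH (convexHull_mono diff_subset hc)
      show 1 + sInf (Dset (insert x S) x) ≤ f + 1
      have h0mem : (0:ℕ) ∈ Dset (insert x S) x := ⟨x, hhx, SimpleGraph.dist_self⟩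
      rw [Nat.sInf_eq_zero.mpr (Or.inl h0mem)]
      omega
  -- assembly
  set E : Set ℕ := {j : ℕ | ∃ x : Pt, relDepth S x = j} with hE_def
  have hay : ∀ j ∈ E, 1 ≤ j ∧ j ≤ f + 1 := by
    rintro j ⟨x, hx⟩
    constructor
    · rw [← hx]
      show 1 ≤ 1 + sInf (Dset (insert x S) x)
      omega
    · rw [← hx]; exact hup x
  have hsub : E ⊆ Set.Icc 1 (f + 1) := fun j hj => Set.mem_Icc.mpr (hay j hj)
  have hsup : Set.Icc 1 f ⊆ E := by
    intro j hj
    obtain ⟨x, hx⟩ := hlow j (Set.mem_Icc.mp hj).1 (Set.mem_Icc.mp hj).2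
    exact ⟨x, hx⟩
  by_cases hft : (f + 1) ∈ E
  · right
    have hEeq : E = Set.Icc 1 (f + 1) := by
      apply subset_antisymm hsub
      intro j hj
      obtain ⟨h1, h2⟩ := Set.mem_Icc.mp hj
      by_cases hj' : j = f + 1
      · rw [hj']; exact hft
      · exact hsup (Set.mem_Icc.mpr ⟨h1, by omega⟩)
    rw [hL, hEeq, ← Finset.coe_Icc, Set.ncard_coe_finset, Nat.card_Icc]
    omega
  · left
    have hEeq : E = Set.Icc 1 f := by
      apply subset_antisymm _ hsup
      intro j hj
      obtain ⟨h1, h2⟩ := hay j hj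
      refine Set.mem_Icc.mpr ⟨h1, ?_⟩
      by_cases hj' : j = f + 1
      · exact absurd (hj' ▸ hj) hft
      · omega
    rw [hL, hEeq, ← Finset.coe_Icc, Set.ncard_coe_finset, Nat.card_Icc]
    omega
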